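/- Let D̄ be a real number with v(r−ρ²) ≤ D̄ ≤ vr. For α ∈ ℝ the following are equivalent: (i) D_P(α, 0) = D̄; (ii) Q(α) = v(r−ρ²)/D̄; (iii) α = −ρ/r + √((1−ρ²/r)(v/D̄ − 1/r)) or α = −ρ/r − √((1−ρ²/r)(v/D̄ − 1/r)). Moreover the root α⁺ = −ρ/r + √((1−ρ²/r)(v/D̄ − 1/r)) satisfies −ρ/r ≤ α⁺ ≤ 0. -/

import Mathlib

/-- `Q α = 1 + 2αρ + α²r`, the normalized second moment of `Y = X + αθ` (divided by `v`). -/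
noncomputable def Q (ρ r α : ℝ) : ℝ := 1 + 2 * α * ρ + α ^ 2 * r

/-- Distortion `D_C(α, s) = E(X − E[X|Y])²` for `Y = X + αθ + S`, `S ~ N(0, s)`. -/
noncomputable def DC (v ρ r α s : ℝ) : ℝ :=
  v * (1 - (1 + α * ρ) ^ 2 / (Q ρ r α + s / v))

/-- Privacy level `D_P(α, s) = E(θ − E[θ|Y])²` for `Y = X + αθ + S`, `S ~ N(0, s)`. -/
noncomputable def DP (v ρ r α s : ℝ) : ℝ :=
  v * (r - (ρ + r * α) ^ 2 / (Q ρ r α + s / v))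

/-- Characterization of the noiseless encoders meeting the privacy constraint with equality:
`D_P(α,0) = D̄` iff `Q(α) = v(r−ρ²)/D̄` iff `α` is one of the two roots
`−ρ/r ± √((1−ρ²/r)(v/D̄ − 1/r))`; moreover the plus-root lies in `[−ρ/r, 0]`. -/
theorem noiseless_constraint_roots (v ρ r D : ℝ) (hv : 0 < v) (hρ : 0 ≤ ρ) (hr : ρ ^ 2 < r)
    (hD1 : v * (r - ρ ^ 2) ≤ D) (hD2 : D ≤ v * r) :
    (∀ α : ℝ,
      (DP v ρ r α 0 = D ↔ Q ρ r α = v * (r - ρ ^ 2) / D) ∧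
      (DP v ρ r α 0 = D ↔
        α = -ρ / r + Real.sqrt ((1 - ρ ^ 2 / r) * (v / D - 1 / r)) ∨
        α = -ρ / r - Real.sqrt ((1 - ρ ^ 2 / r) * (v / D - 1 / r)))) ∧
    -ρ / r ≤ -ρ / r + Real.sqrt ((1 - ρ ^ 2 / r) * (v / D - 1 / r)) ∧
    -ρ / r + Real.sqrt ((1 - ρ ^ 2 / r) * (v / D - 1 / r)) ≤ 0 := by
  have hr0 : 0 < r := lt_of_le_of_lt (sq_nonneg ρ) hr
  have hD0 : 0 < D := lt_of_lt_of_le (by nlinarith) hD1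
  set K : ℝ := (1 - ρ ^ 2 / r) * (v / D - 1 / r) with hK
  have hK0 : 0 ≤ K := by
    apply mul_nonneg
    · have : ρ ^ 2 / r ≤ 1 := by rw [div_le_one hr0]; linarith
      linarith
    · have : 1 / r ≤ v / D := by
        rw [div_le_div_iff₀ hr0 hD0]; linarith
      linarith
  set s : ℝ := Real.sqrt K with hs
  have hs0 : 0 ≤ s := Real.sqrt_nonneg K
  have hs2 : s ^ 2 = K := Real.sq_sqrt hK0
  clear_value s
  have hQpos : ∀ α : ℝ, 0 < Q ρ r α := by
    intro α
    unfold Q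
    nlinarith [sq_nonneg (ρ + r * α)]
  have hDPeq : ∀ α : ℝ, DP v ρ r α 0 = v * (r - ρ ^ 2) / Q ρ r α := by
    intro α
    have hq := (hQpos α).ne'
    unfold DP
    rw [zero_div]
    unfold Q at *
    have key : r - (ρ + r * α) ^ 2 / (1 + 2 * α * ρ + α ^ 2 * r)
        = (r - ρ ^ 2) / (1 + 2 * α * ρ + α ^ 2 * r) := by
      rw [eq_div_iff hq, sub_mul, div_mul_cancel₀ _ hq]; ring
    rw [add_zero, key, mul_div_assoc]
  have hfact : ∀ α : ℝ,
      Q ρ r α - v * (r - ρ ^ 2) / D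
        = r * ((α - (-ρ / r + s)) * (α - (-ρ / r - s))) := by
    intro α
    unfold Q
    have hs2' : s ^ 2 = (1 - ρ ^ 2 / r) * (v / D - 1 / r) := hs2
    field_simp at hs2' ⊢
    nlinarith [hs2']
  constructor
  · intro α
    have h1 : DP v ρ r α 0 = D ↔ Q ρ r α = v * (r - ρ ^ 2) / D := by
      rw [hDPeq α]
      rw [div_eq_iff (hQpos α).ne', eq_div_iff hD0.ne']
      constructor <;> intro h <;> linarith
    refine ⟨h1, h1.trans ?_⟩
    have h2 : Q ρ r α = v * (r - ρ ^ 2) / D ↔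
        (α - (-ρ / r + s)) * (α - (-ρ / r - s)) = 0 := by
      rw [← sub_eq_zero, hfact α, mul_eq_zero, or_iff_right hr0.ne']
    rw [h2, mul_eq_zero, sub_eq_zero, sub_eq_zero]
  constructor
  · linarith
  · have hKle : K ≤ (ρ / r) ^ 2 := by
      rw [hK, div_pow]
      rw [show (1 - ρ ^ 2 / r) * (v / D - 1 / r) = (r - ρ ^ 2) * (v * r - D) / (D * r ^ 2) by
        field_simp]
      rw [div_le_div_iff₀ (by positivity) (by positivity)]
      nlinarith [mul_nonneg (mul_nonneg (mul_nonneg hr0.le hr0.le) hr0.le)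
        (sub_nonneg.2 hD1)]
    have : s ≤ ρ / r := by
      rw [hs]
      calc Real.sqrt K ≤ Real.sqrt ((ρ / r) ^ 2) := Real.sqrt_le_sqrt hKle
        _ = ρ / r := Real.sqrt_sq (by positivity)
    rw [neg_div]
    linarith
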